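/- Let T be an ℕ^k-action by local homeomorphisms on a locally compact Hausdorff space X with a dense orbit, and let Y(x) denote, for x ∈ X, the maximal relatively open subset Y of the closure of [x] with Σ(x)_Y = Σ(x) (where Σ(x) is defined using relatively open subsets of closure([x])). Then for x, y ∈ X, Y(x) = Y(y) if and only if closure([x]) = closure([y]). -/

import Mathlib

/-- The orbit `[x]` of a point under an `ℕ^k`-action. -/
def orbitDR {k : ℕ} {X : Type*} (T : (Fin k → ℕ) → X → X) (x : X) : Set X :=
  {y | ∃ m n : Fin k → ℕ, T m x = T n y}

/-- `Σ(x)`: pairs `(m,n)` such that `T^m = T^n` on some nonempty relatively open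
subset of the orbit closure of `x`. -/
def SigmaOf {k : ℕ} {X : Type*} [TopologicalSpace X]
    (T : (Fin k → ℕ) → X → X) (x : X) : Set ((Fin k → ℕ) × (Fin k → ℕ)) :=
  {p | ∃ U : Set X, (∃ V : Set X, IsOpen V ∧ U = V ∩ closure (orbitDR T x)) ∧
    U.Nonempty ∧ ∀ z ∈ U, T p.1 z = T p.2 z}

/-- `Y(x)`: the union of all relatively open subsets `Y` of the orbit closure of `x`
with `Σ(x)_Y = Σ(x)`; it is the maximal such set. -/
def Ymax {k : ℕ} {X : Type*} [TopologicalSpace X]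
    (T : (Fin k → ℕ) → X → X) (x : X) : Set X :=
  ⋃₀ {U : Set X | (∃ V : Set X, IsOpen V ∧ U = V ∩ closure (orbitDR T x)) ∧
    {p : (Fin k → ℕ) × (Fin k → ℕ) | ∀ z ∈ U, T p.1 z = T p.2 z} = SigmaOf T x}

set_option linter.unusedSectionVars false
set_option linter.unusedVariables false
set_option maxHeartbeats 1000000

namespace DRproof

variable {k : ℕ} {X : Type*} [TopologicalSpace X]
variable {T : (Fin k → ℕ) → X → X}

theorem Tapp (hTadd : ∀ m n, T (m + n) = T m ∘ T n) (m n : Fin k → ℕ) (z : X) :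
    T m (T n z) = T (n + m) z := by
  rw [add_comm, hTadd]; rfl

theorem mem_orbit_self (x : X) : x ∈ orbitDR T x := ⟨0, 0, rfl⟩

theorem orbit_symm {x y : X} (h : y ∈ orbitDR T x) : x ∈ orbitDR T y := by
  obtain ⟨m, n, hmn⟩ := h; exact ⟨n, m, hmn.symm⟩

theorem orbit_trans (hTadd : ∀ m n, T (m + n) = T m ∘ T n) {x y z : X}
    (h1 : y ∈ orbitDR T x) (h2 : z ∈ orbitDR T y) : z ∈ orbitDR T x := by
  obtain ⟨m, n, hmn⟩ := h1
  obtain ⟨p, q, hpq⟩ := h2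
  refine ⟨m + p, q + n, ?_⟩
  have e1 : T p (T m x) = T p (T n y) := by rw [hmn]
  rw [Tapp hTadd, Tapp hTadd] at e1
  have e2 : T n (T p y) = T n (T q z) := by rw [hpq]
  rw [Tapp hTadd, Tapp hTadd] at e2
  rw [e1, add_comm n p, e2]

theorem orbit_eq (hTadd : ∀ m n, T (m + n) = T m ∘ T n) {x y : X}
    (h : y ∈ orbitDR T x) : orbitDR T y = orbitDR T x := by
  ext z
  exact ⟨fun hz => orbit_trans hTadd h hz, fun hz => orbit_trans hTadd (orbit_symm h) hz⟩

theorem orbit_fwd (hT0 : T 0 = id) (hTadd : ∀ m n, T (m + n) = T m ∘ T n) {x y : X}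
    (h : y ∈ orbitDR T x) (a : Fin k → ℕ) : T a y ∈ orbitDR T x := by
  have : T a y ∈ orbitDR T y := ⟨a, 0, by rw [hT0]; rfl⟩
  exact orbit_trans hTadd h this

/-- Backward invariance of orbit closures, via local homeomorphisms. -/
theorem cl_bwd (hTadd : ∀ m n, T (m + n) = T m ∘ T n)
    (hloc : ∀ m, IsLocalHomeomorph (T m)) {y z w : X} {a b : Fin k → ℕ}
    (hz : z ∈ closure (orbitDR T y)) (hrel : T a z = T b w) :
    w ∈ closure (orbitDR T y) := by
  obtain ⟨e, hwsrc, hfe⟩ := hloc b w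
  have hTz : T a z ∈ e.target := by
    rw [hrel, hfe]; exact e.map_source hwsrc
  set Uo : Set X := T a ⁻¹' e.target with hUo
  have hUoOpen : IsOpen Uo := e.open_target.preimage (hloc a).continuous
  have hzUo : z ∈ Uo := hTz
  have hz2 : z ∈ closure (Uo ∩ orbitDR T y) := hUoOpen.inter_closure ⟨hzUo, hz⟩
  set f : X → X := fun v => e.symm (T a v) with hf
  have hfz : f z = w := by
    have : T a z = e w := by rw [hrel, hfe]
    rw [hf]; simp only [this]; exact e.left_inv hwsrc
  have hcont : ContinuousAt f z :=
    (e.continuousAt_symm hTz).comp (hloc a).continuous.continuousAt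
  have himg : f '' (Uo ∩ orbitDR T y) ⊆ orbitDR T y := by
    rintro _ ⟨v, ⟨hvUo, hvOrb⟩, rfl⟩
    have hv' : T a v ∈ e.target := hvUo
    have hsrc : e.symm (T a v) ∈ e.source := e.map_target hv'
    have hTb : T b (f v) = T a v := by
      rw [hf]; simp only []; rw [hfe]; exact e.right_inv hv'
    have : v ∈ orbitDR T (f v) := ⟨b, a, hTb⟩
    exact orbit_trans hTadd hvOrb (orbit_symm this)
  have := hcont.continuousWithinAt.mem_closure_image hz2
  rw [hfz] at this
  exact closure_mono himg this

end DRproof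

def RelOn {k : ℕ} {X : Type*} [TopologicalSpace X] (T : (Fin k → ℕ) → X → X) (x : X)
    (m n : Fin k → ℕ) (O : Set X) : Prop :=
  ∀ z ∈ O ∩ closure (orbitDR T x), T m z = T n z

namespace DRproof
variable {k : ℕ} {X : Type*} [TopologicalSpace X]
variable {T : (Fin k → ℕ) → X → X}

theorem relOn_mono {x : X} {m n : Fin k → ℕ} {O O' : Set X} (h : RelOn T x m n O)
    (hsub : O' ⊆ O) : RelOn T x m n O' :=
  fun z hz => h z ⟨hsub hz.1, hz.2⟩

/-- Cancellation: if `T^{m+c} = T^{n+c}` on a relative neighborhood of `z` and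
`T^m z = T^n z`, then `T^m = T^n` on a relative neighborhood of `z`. -/
theorem cancel (hTadd : ∀ m n, T (m + n) = T m ∘ T n)
    (hloc : ∀ m, IsLocalHomeomorph (T m)) {x z : X} {m n c O : _}
    (hO : IsOpen O) (hz : z ∈ O)
    (hrel : RelOn T x (m + c) (n + c) O) (hpt : T m z = T n z) :
    ∃ O', IsOpen O' ∧ z ∈ O' ∧ O' ⊆ O ∧ RelOn T x m n O' := by
  obtain ⟨e, hsrc, hfe⟩ := hloc c (T m z)
  refine ⟨O ∩ (T m ⁻¹' e.source) ∩ (T n ⁻¹' e.source),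
    (hO.inter (e.open_source.preimage (hloc m).continuous)).inter
      (e.open_source.preimage (hloc n).continuous),
    ⟨⟨hz, hsrc⟩, by simpa [Set.mem_preimage, ← hpt] using hsrc⟩,
    fun w hw => hw.1.1, ?_⟩
  rintro w ⟨⟨⟨hwO, hw1⟩, hw2⟩, hwC⟩
  have h1 : T c (T m w) = T c (T n w) := by
    rw [Tapp hTadd, Tapp hTadd]
    exact hrel w ⟨hwO, hwC⟩
  rw [hfe] at h1
  exact e.injOn hw1 hw2 h1

/-- Transfer: relations holding on a relative neighborhood of `u ∈ [x]` also
hold on a relative neighborhood of `T^s u`. -/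
theorem transfer [T2Space X] (hT0 : T 0 = id) (hTadd : ∀ m n, T (m + n) = T m ∘ T n)
    (hloc : ∀ m, IsLocalHomeomorph (T m)) {x u : X} (hu : u ∈ orbitDR T x)
    {O : Set X} (hO : IsOpen O) (huO : u ∈ O) (s : Fin k → ℕ) :
    ∃ O', IsOpen O' ∧ T s u ∈ O' ∧
      ∀ m n, RelOn T x m n O → RelOn T x m n O' := by
  obtain ⟨e, hsrc, hfe⟩ := hloc s u
  set e' := e.restrOpen O hO with he'
  have hsrc' : u ∈ e'.source := by
    rw [he', OpenPartialHomeomorph.restrOpen_source]; exact ⟨hsrc, huO⟩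
  have hcoe : ∀ v : X, e' v = T s v := by intro v; rw [hfe]; rfl
  refine ⟨e'.target, e'.open_target, ?_, ?_⟩
  · have := e'.map_source hsrc'
    rwa [hcoe] at this
  intro m n hrel
  have key : ∀ v' ∈ e'.target ∩ orbitDR T x, T m v' = T n v' := by
    rintro v' ⟨hv't, hv'orb⟩
    set u' := e'.symm v' with hu'
    have hu'src : u' ∈ e'.source := e'.map_target hv't
    have hu'O : u' ∈ O := by
      have := hu'src; rw [he', OpenPartialHomeomorph.restrOpen_source] at this
      exact this.2
    have hTsu' : T s u' = v' := by rw [← hcoe]; exact e'.right_inv hv't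
    have hu'orb : u' ∈ orbitDR T x := by
      have h1 : v' ∈ orbitDR T u' := ⟨s, 0, by rw [hT0]; exact hTsu'⟩
      exact orbit_trans hTadd hv'orb (orbit_symm h1)
    have hrelu' : T m u' = T n u' := hrel u' ⟨hu'O, subset_closure hu'orb⟩
    calc T m v' = T m (T s u') := by rw [hTsu']
    _ = T (s + m) u' := Tapp hTadd m s u'
    _ = T (m + s) u' := by rw [add_comm]
    _ = T s (T m u') := (Tapp hTadd s m u').symm
    _ = T s (T n u') := by rw [hrelu']
    _ = T (n + s) u' := Tapp hTadd s n u'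
    _ = T (s + n) u' := by rw [add_comm]
    _ = T n (T s u') := by rw [Tapp hTadd]
    _ = T n v' := by rw [hTsu']
  rintro v' ⟨hv't, hv'C⟩
  have hcl : v' ∈ closure (e'.target ∩ orbitDR T x) :=
    e'.open_target.inter_closure ⟨hv't, hv'C⟩
  have hclosed : IsClosed {w : X | T m w = T n w} :=
    isClosed_eq (hloc m).continuous (hloc n).continuous
  exact closure_minimal (fun w hw => key w hw) hclosed hcl

theorem ptadd (hTadd : ∀ m n, T (m + n) = T m ∘ T n) {z : X} {a b c d : Fin k → ℕ}
    (h1 : T a z = T b z) (h2 : T c z = T d z) : T (a + c) z = T (b + d) z := by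
  calc T (a + c) z = T c (T a z) := (Tapp hTadd c a z).symm
  _ = T c (T b z) := by rw [h1]
  _ = T b (T c z) := by rw [Tapp hTadd, Tapp hTadd, add_comm]
  _ = T b (T d z) := by rw [h2]
  _ = T (d + b) z := Tapp hTadd b d z
  _ = T (b + d) z := by rw [add_comm]

theorem sigma_intro {x : X} {m n : Fin k → ℕ} {O : Set X} (hO : IsOpen O)
    (hne : (O ∩ closure (orbitDR T x)).Nonempty) (hrel : RelOn T x m n O) :
    (m, n) ∈ SigmaOf T x :=
  ⟨O ∩ closure (orbitDR T x), ⟨O, hO, rfl⟩, hne, fun z hz => hrel z hz⟩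

theorem sigma_elim {x : X} {p : (Fin k → ℕ) × (Fin k → ℕ)} (h : p ∈ SigmaOf T x) :
    ∃ O, IsOpen O ∧ (O ∩ closure (orbitDR T x)).Nonempty ∧ RelOn T x p.1 p.2 O := by
  obtain ⟨U, ⟨V, hV, rfl⟩, hne, hrel⟩ := h
  exact ⟨V, hV, hne, fun z hz => hrel z hz⟩

end DRproof

namespace DRproof
variable {k : ℕ} {X : Type*} [TopologicalSpace X]
variable {T : (Fin k → ℕ) → X → X}

/-- positive part of an integer vector -/
def gp {k : ℕ} (g : Fin k → ℤ) : Fin k → ℕ := fun i => (g i).toNat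
/-- negative part of an integer vector -/
def gm {k : ℕ} (g : Fin k → ℤ) : Fin k → ℕ := fun i => (-(g i)).toNat

/-- the difference vector of a pair of natural vectors -/
def dv {k : ℕ} (m n : Fin k → ℕ) : Fin k → ℤ := fun i => (m i : ℤ) - (n i : ℤ)

theorem gp_add_eq (m n : Fin k → ℕ) : gp (dv m n) + n = gm (dv m n) + m := by
  funext i
  simp only [gp, gm, dv, Pi.add_apply]
  omega

theorem gp_min (m n : Fin k → ℕ) : gp (dv m n) + (fun i => min (m i) (n i)) = m := by
  funext i; simp only [gp, dv, Pi.add_apply]; omega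

theorem gm_min (m n : Fin k → ℕ) : gm (dv m n) + (fun i => min (m i) (n i)) = n := by
  funext i; simp only [gm, dv, Pi.add_apply]; omega

/-- Every pair in `Σ(x)` gives rise to its minimal pair holding on a relative
neighborhood of a point of the orbit. -/
theorem minimal_rel [T2Space X] (hT0 : T 0 = id) (hTadd : ∀ m n, T (m + n) = T m ∘ T n)
    (hloc : ∀ m, IsLocalHomeomorph (T m)) {x : X} {m n : Fin k → ℕ}
    (h : (m, n) ∈ SigmaOf T x) :
    ∃ z ∈ orbitDR T x, ∃ O, IsOpen O ∧ z ∈ O ∧ RelOn T x (gp (dv m n)) (gm (dv m n)) O := by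
  obtain ⟨O, hO, ⟨w0, hw0O, hw0C⟩, hrel⟩ := sigma_elim h
  obtain ⟨u, huO, huOrb⟩ := _root_.mem_closure_iff.mp hw0C O hO hw0O
  set g := dv m n with hg
  set z := T m u with hz
  have hzOrb : z ∈ orbitDR T x := orbit_fwd hT0 hTadd huOrb m
  obtain ⟨O₁, hO₁, hzO₁, htrans⟩ := transfer hT0 hTadd hloc huOrb hO huO m
  have hrel₁ : RelOn T x m n O₁ := htrans m n hrel
  have hrel₂ : RelOn T x (gp g + m) (gm g + m) O₁ := by
    intro w hw
    have h0 := hrel₁ w hw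
    calc T (gp g + m) w = T (gp g) (T m w) := by rw [Tapp hTadd, add_comm]
    _ = T (gp g) (T n w) := by rw [h0]
    _ = T (gp g + n) w := by rw [Tapp hTadd, add_comm]
    _ = T (gm g + m) w := by rw [hg, gp_add_eq]
  have hpt : T (gp g) z = T (gm g) z := by
    have hu' : T m u = T n u := hrel u ⟨huO, subset_closure huOrb⟩
    calc T (gp g) z = T (m + gp g) u := by rw [hz, Tapp hTadd]
    _ = T (gp g + m) u := by rw [add_comm]
    _ = T (gp g) (T m u) := by rw [Tapp hTadd, add_comm]
    _ = T (gp g) (T n u) := by rw [hu']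
    _ = T (gp g + n) u := by rw [Tapp hTadd, add_comm]
    _ = T (gm g + m) u := by rw [hg, gp_add_eq]
    _ = T (gm g) (T m u) := by rw [Tapp hTadd, add_comm]
    _ = T (gm g) z := by rw [hz]
  obtain ⟨O', hO', hzO', _, hrel'⟩ := cancel hTadd hloc hO₁ hzO₁ hrel₂ hpt
  exact ⟨z, hzOrb, O', hO', hzO', hrel'⟩

/-- Combining finitely many minimal relations on a common relative neighborhood
of a single orbit point. -/
theorem combine [T2Space X] (hT0 : T 0 = id) (hTadd : ∀ m n, T (m + n) = T m ∘ T n)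
    (hloc : ∀ m, IsLocalHomeomorph (T m)) (x : X) (F : Finset (Fin k → ℤ))
    (hF : ∀ g ∈ F, ∃ m n : Fin k → ℕ, (m, n) ∈ SigmaOf T x ∧ dv m n = g) :
    ∃ z ∈ orbitDR T x, ∃ O, IsOpen O ∧ z ∈ O ∧
      ∀ g ∈ F, RelOn T x (gp g) (gm g) O := by
  classical
  induction F using Finset.induction_on with
  | empty =>
    exact ⟨x, mem_orbit_self x, Set.univ, isOpen_univ, Set.mem_univ x, by simp⟩
  | @insert g F hgF ih =>
    obtain ⟨z₁, hz₁, O₁, hO₁, hzO₁, hrels₁⟩ := ih (fun g' hg' => hF g' (Finset.mem_insert_of_mem hg'))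
    obtain ⟨m, n, hmn, hdv⟩ := hF g (Finset.mem_insert_self g F)
    obtain ⟨z₂, hz₂, O₂, hO₂, hzO₂, hrel₂⟩ := minimal_rel hT0 hTadd hloc hmn
    rw [hdv] at hrel₂
    have hz₂₁ : z₂ ∈ orbitDR T z₁ := by rw [orbit_eq hTadd hz₁]; exact hz₂
    obtain ⟨a, b, hab⟩ := hz₂₁
    obtain ⟨O₁', hO₁', hvO₁', htr₁⟩ := transfer hT0 hTadd hloc hz₁ hO₁ hzO₁ a
    obtain ⟨O₂', hO₂', hvO₂', htr₂⟩ := transfer hT0 hTadd hloc hz₂ hO₂ hzO₂ b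
    rw [← hab] at hvO₂'
    refine ⟨T a z₁, orbit_fwd hT0 hTadd hz₁ a, O₁' ∩ O₂', hO₁'.inter hO₂',
      ⟨hvO₁', hvO₂'⟩, ?_⟩
    intro g' hg'
    rcases Finset.mem_insert.mp hg' with rfl | hg'F
    · exact relOn_mono (htr₂ _ _ hrel₂) Set.inter_subset_right
    · exact relOn_mono (htr₁ _ _ (hrels₁ g' hg'F)) Set.inter_subset_left

end DRproof

namespace DRproof
variable {k : ℕ}

theorem sum_lt_of_lt {a c : Fin k → ℕ} (hca : c ≤ a) (hne : c ≠ a) :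
    ∑ i, c i < ∑ i, a i := by
  obtain ⟨i0, hi0⟩ := Function.ne_iff.mp hne
  exact Finset.sum_lt_sum (fun i _ => hca i)
    ⟨i0, Finset.mem_univ _, lt_of_le_of_ne (hca i0) hi0⟩

theorem exists_minimal_le (S : Set (Fin k → ℕ)) {a : Fin k → ℕ} (ha : a ∈ S) :
    ∃ b ∈ S, b ≤ a ∧ ∀ c ∈ S, c ≤ b → c = b := by
  generalize hN : (∑ i, a i) = N
  induction N using Nat.strong_induction_on generalizing a with
  | _ N ih =>
    by_cases hmin : ∀ c ∈ S, c ≤ a → c = a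
    · exact ⟨a, ha, le_refl a, hmin⟩
    · push_neg at hmin
      obtain ⟨c, hc, hca, hne⟩ := hmin
      obtain ⟨b, hb, hbc, hbmin⟩ := ih (∑ i, c i) (hN ▸ sum_lt_of_lt hca hne) hc rfl
      exact ⟨b, hb, le_trans hbc hca, hbmin⟩

theorem minimals_finite (S : Set (Fin k → ℕ)) :
    {a | a ∈ S ∧ ∀ c ∈ S, c ≤ a → c = a}.Finite := by
  apply IsAntichain.finite_of_partiallyWellOrderedOn (r := (· ≤ · : (Fin k → ℕ) → _ → Prop))
  · intro a ha b hb hne hle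
    exact hne (hb.2 a ha.1 hle)
  · exact Set.isPWO_of_wellQuasiOrderedLE _

theorem gen_exists (S : Set (Fin k → ℕ))
    (hsub : ∀ a ∈ S, ∀ b ∈ S, b ≤ a → a - b ∈ S) :
    ∃ F : Finset (Fin k → ℕ), (∀ f ∈ F, f ∈ S ∧ f ≠ 0) ∧
      ∀ a ∈ S, ∃ ms : Multiset (Fin k → ℕ), (∀ u ∈ ms, u ∈ F) ∧ ms.sum = a := by
  classical
  set S' : Set (Fin k → ℕ) := {a | a ∈ S ∧ a ≠ 0} with hS'
  refine ⟨(minimals_finite S').toFinset, ?_, ?_⟩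
  · intro f hf
    rw [Set.Finite.mem_toFinset] at hf
    exact hf.1
  · intro a ha
    generalize hN : (∑ i, a i) = N
    induction N using Nat.strong_induction_on generalizing a with
    | _ N ih =>
      by_cases ha0 : a = 0
      · exact ⟨0, by simp, by simp [ha0]⟩
      · obtain ⟨b, hb, hba, hbmin⟩ := exists_minimal_le S' (show a ∈ S' from ⟨ha, ha0⟩)
        have hbF : b ∈ (minimals_finite S').toFinset := by
          rw [Set.Finite.mem_toFinset]; exact ⟨hb, hbmin⟩
        have hsubm : a - b ∈ S := hsub a ha b hb.1 hba
        have hlt : ∑ i, (a - b) i < ∑ i, a i := by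
          apply sum_lt_of_lt (fun i => by simp [tsub_le_self])
          intro hEq
          apply hb.2
          funext i
          have h1 : (a - b) i = a i := congrFun hEq i
          have hle : b i ≤ a i := hba i
          simp only [Pi.sub_apply] at h1
          show b i = 0
          omega
        obtain ⟨ms', hms'F, hms'sum⟩ := ih (∑ i, (a - b) i) (hN ▸ hlt) (a - b) hsubm rfl
        refine ⟨b ::ₘ ms', ?_, ?_⟩
        · intro u hu
          rcases Multiset.mem_cons.mp hu with rfl | hu'
          · exact hbF
          · exact hms'F u hu'
        · rw [Multiset.sum_cons, hms'sum]
          funext i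
          have hle : b i ≤ a i := hba i
          show b i + (a - b) i = a i
          simp only [Pi.sub_apply]
          omega

/-- signed embedding of a natural vector according to a sign pattern -/
def bsig {k : ℕ} (σ : Fin k → Bool) (α : Fin k → ℕ) : Fin k → ℤ :=
  fun i => if σ i then (α i : ℤ) else -(α i : ℤ)

theorem bsig_zero (σ : Fin k → Bool) : bsig σ 0 = 0 := by
  funext i; by_cases h : σ i <;> simp [bsig, h]

theorem gp_bsig_add (σ : Fin k → Bool) (u s : Fin k → ℕ) :
    gp (bsig σ (u + s)) = gp (bsig σ u) + gp (bsig σ s) := by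
  funext i; by_cases h : σ i <;> simp [gp, bsig, h] <;> omega

theorem gm_bsig_add (σ : Fin k → Bool) (u s : Fin k → ℕ) :
    gm (bsig σ (u + s)) = gm (bsig σ u) + gm (bsig σ s) := by
  funext i; by_cases h : σ i <;> simp [gm, bsig, h] <;> omega

end DRproof

namespace DRproof
variable {k : ℕ} {X : Type*} [TopologicalSpace X]
variable {T : (Fin k → ℕ) → X → X}

theorem msum_rel (hTadd : ∀ m n, T (m + n) = T m ∘ T n) {z : X} (σ : Fin k → Bool) :
    ∀ ms : Multiset (Fin k → ℕ),
      (∀ u ∈ ms, T (gp (bsig σ u)) z = T (gm (bsig σ u)) z) →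
      T (gp (bsig σ ms.sum)) z = T (gm (bsig σ ms.sum)) z := by
  intro ms
  induction ms using Multiset.induction_on with
  | empty =>
    intro _
    rw [Multiset.sum_zero, bsig_zero]
    have h1 : gp (0 : Fin k → ℤ) = 0 := by funext i; simp [gp]
    have h2 : gm (0 : Fin k → ℤ) = 0 := by funext i; simp [gm]
    rw [h1, h2]
  | cons u ms ih =>
    intro h
    rw [Multiset.sum_cons, gp_bsig_add, gm_bsig_add]
    exact ptadd hTadd (h u (Multiset.mem_cons_self u ms))
      (ih fun v hv => h v (Multiset.mem_cons_of_mem hv))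

theorem sigma_neg {x : X} {g : Fin k → ℤ}
    (hg : ∃ m n : Fin k → ℕ, (m, n) ∈ SigmaOf T x ∧ dv m n = g) :
    ∃ m n : Fin k → ℕ, (m, n) ∈ SigmaOf T x ∧ dv m n = -g := by
  obtain ⟨m, n, hmn, hdv⟩ := hg
  obtain ⟨O, hO, hne, hrel⟩ := sigma_elim hmn
  refine ⟨n, m, sigma_intro hO hne (fun z hz => (hrel z hz).symm), ?_⟩
  funext i
  have := congrFun hdv i
  simp only [dv, Pi.neg_apply] at *
  omega

theorem sigma_add [T2Space X] (hT0 : T 0 = id) (hTadd : ∀ m n, T (m + n) = T m ∘ T n)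
    (hloc : ∀ m, IsLocalHomeomorph (T m)) {x : X} {g h : Fin k → ℤ}
    (hg : ∃ m n : Fin k → ℕ, (m, n) ∈ SigmaOf T x ∧ dv m n = g)
    (hh : ∃ m n : Fin k → ℕ, (m, n) ∈ SigmaOf T x ∧ dv m n = h) :
    ∃ m n : Fin k → ℕ, (m, n) ∈ SigmaOf T x ∧ dv m n = g + h := by
  classical
  obtain ⟨z, hzorb, O, hO, hzO, hrels⟩ := combine hT0 hTadd hloc x {g, h}
    (by
      intro g' hg'
      rcases Finset.mem_insert.mp hg' with rfl | hg''
      · exact hg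
      · rw [Finset.mem_singleton] at hg''; subst hg''; exact hh)
  have hrelg := hrels g (Finset.mem_insert_self _ _)
  have hrelh := hrels h (by simp)
  have hrel : RelOn T x (gp g + gp h) (gm g + gm h) O :=
    fun w hw => ptadd hTadd (hrelg w hw) (hrelh w hw)
  refine ⟨gp g + gp h, gm g + gm h,
    sigma_intro hO ⟨z, hzO, subset_closure hzorb⟩ hrel, ?_⟩
  funext i
  simp only [dv, gp, gm, Pi.add_apply]
  omega

/-- The key nonemptiness statement: `Ymax T x` contains a point of the orbit of `x`. -/
theorem exists_orbit_mem_Ymax [T2Space X] (hT0 : T 0 = id)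
    (hTadd : ∀ m n, T (m + n) = T m ∘ T n)
    (hloc : ∀ m, IsLocalHomeomorph (T m)) (x : X) :
    ∃ z, z ∈ orbitDR T x ∧ z ∈ Ymax T x := by
  classical
  set G : Set (Fin k → ℤ) := {g | ∃ m n : Fin k → ℕ, (m, n) ∈ SigmaOf T x ∧ dv m n = g}
    with hG
  have horth : ∀ σ : Fin k → Bool, ∃ F : Finset (Fin k → ℕ),
      (∀ f ∈ F, bsig σ f ∈ G) ∧
      ∀ a : Fin k → ℕ, bsig σ a ∈ G →
        ∃ ms : Multiset (Fin k → ℕ), (∀ u ∈ ms, u ∈ F) ∧ ms.sum = a := by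
    intro σ
    have hsub : ∀ a ∈ {a : Fin k → ℕ | bsig σ a ∈ G}, ∀ b ∈ {a : Fin k → ℕ | bsig σ a ∈ G},
        b ≤ a → a - b ∈ {a : Fin k → ℕ | bsig σ a ∈ G} := by
      intro a ha b hb hba
      have hdiff : bsig σ (a - b) = bsig σ a + -(bsig σ b) := by
        funext i
        have h1 : b i ≤ a i := hba i
        simp only [bsig, Pi.add_apply, Pi.neg_apply, Pi.sub_apply]
        by_cases h0 : σ i = true
        · rw [if_pos h0, if_pos h0, if_pos h0]
          push_cast [h1]
          ring
        · rw [if_neg h0, if_neg h0, if_neg h0]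
          push_cast [h1]
          ring
      show bsig σ (a - b) ∈ G
      rw [hdiff]
      exact sigma_add hT0 hTadd hloc ha (sigma_neg hb)
    obtain ⟨F, h1, h2⟩ := gen_exists {a : Fin k → ℕ | bsig σ a ∈ G} hsub
    exact ⟨F, fun f hf => (h1 f hf).1, fun a ha => h2 a ha⟩
  choose Fσ hF1 hF2 using horth
  set Ftot : Finset (Fin k → ℤ) := Finset.univ.biUnion (fun σ => (Fσ σ).image (bsig σ))
    with hFtotdef
  have hFtot : ∀ g ∈ Ftot, ∃ m n : Fin k → ℕ, (m, n) ∈ SigmaOf T x ∧ dv m n = g := by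
    intro g hg
    rw [hFtotdef, Finset.mem_biUnion] at hg
    obtain ⟨σ, _, hg⟩ := hg
    rw [Finset.mem_image] at hg
    obtain ⟨α, hα, rfl⟩ := hg
    exact hF1 σ α hα
  obtain ⟨z, hzorb, O, hO, hzO, hrels⟩ := combine hT0 hTadd hloc x Ftot hFtot
  refine ⟨z, hzorb, Set.mem_sUnion.mpr ⟨O ∩ closure (orbitDR T x), ⟨⟨O, hO, rfl⟩, ?_⟩,
    ⟨hzO, subset_closure hzorb⟩⟩⟩
  ext p
  simp only [Set.mem_setOf_eq]
  constructor
  · intro hp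
    exact sigma_intro hO ⟨z, ⟨hzO, subset_closure hzorb⟩⟩ (fun w hw => hp w hw)
  · intro hp
    obtain ⟨m, n⟩ := p
    intro w hw
    set g : Fin k → ℤ := dv m n with hg'
    have hgG : g ∈ G := ⟨m, n, hp, rfl⟩
    set σ : Fin k → Bool := fun i => decide (0 ≤ g i) with hσ
    set α : Fin k → ℕ := fun i => (g i).natAbs with hα
    have hbs : bsig σ α = g := by
      funext i
      simp only [bsig, hσ, hα, decide_eq_true_eq]
      by_cases h0 : 0 ≤ g i
      · rw [if_pos h0]; omega
      · rw [if_neg h0]; omega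
    obtain ⟨ms, hmsF, hmssum⟩ := hF2 σ α (by rw [hbs]; exact hgG)
    have hpt : T (gp (bsig σ α)) w = T (gm (bsig σ α)) w := by
      rw [← hmssum]
      refine msum_rel hTadd σ ms (fun u hu => ?_)
      refine hrels (bsig σ u) ?_ w hw
      rw [hFtotdef, Finset.mem_biUnion]
      exact ⟨σ, Finset.mem_univ σ, Finset.mem_image_of_mem _ (hmsF u hu)⟩
    rw [hbs] at hpt
    calc T m w = T (gp g + fun i => min (m i) (n i)) w := by rw [gp_min m n]
    _ = T (fun i => min (m i) (n i)) (T (gp g) w) := by rw [Tapp hTadd, add_comm]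
    _ = T (fun i => min (m i) (n i)) (T (gm g) w) := by rw [hpt]
    _ = T (gm g + fun i => min (m i) (n i)) w := by rw [Tapp hTadd, add_comm]
    _ = T n w := by rw [gm_min m n]

theorem Ymax_subset {x : X} : Ymax T x ⊆ closure (orbitDR T x) := by
  intro z hz
  obtain ⟨U, ⟨⟨V, _, rfl⟩, _⟩, hzU⟩ := hz
  exact hzU.2

end DRproof

/-- For an `ℕ^k`-action by local homeomorphisms on a locally compact Hausdorff space
with a dense orbit: `Y(x) = Y(y)` if and only if the orbit closures of `x` and `y`
coincide. -/
theorem Ymax_eq_iff_orbit_closure_eq {k : ℕ} {X : Type*} [TopologicalSpace X]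
    [LocallyCompactSpace X] [T2Space X]
    (T : (Fin k → ℕ) → X → X) (hT0 : T 0 = id)
    (hTadd : ∀ m n, T (m + n) = T m ∘ T n)
    (hloc : ∀ m, IsLocalHomeomorph (T m))
    (hdense : ∃ x : X, Dense (orbitDR T x)) :
    ∀ x y : X, Ymax T x = Ymax T y ↔ closure (orbitDR T x) = closure (orbitDR T y) := by
  intro x y
  constructor
  · intro h
    have key : ∀ a b : X, Ymax T a = Ymax T b →
        closure (orbitDR T a) ⊆ closure (orbitDR T b) := by
      intro a b hab
      obtain ⟨z, hzorb, hzY⟩ := DRproof.exists_orbit_mem_Ymax hT0 hTadd hloc a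
      have hzCb : z ∈ closure (orbitDR T b) := DRproof.Ymax_subset (hab ▸ hzY)
      have horb : orbitDR T z ⊆ closure (orbitDR T b) := by
        rintro w ⟨m, n, hmn⟩
        exact DRproof.cl_bwd hTadd hloc hzCb hmn
      calc closure (orbitDR T a) = closure (orbitDR T z) := by
            rw [DRproof.orbit_eq hTadd hzorb]
      _ ⊆ closure (orbitDR T b) := closure_minimal horb isClosed_closure
    exact Set.Subset.antisymm (key x y h) (key y x h.symm)
  · intro h
    simp only [Ymax, SigmaOf, h]
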